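/- A parametric subtrace is a derived trace: if 𝒯' is a parametric subtrace of 𝒯 (obtained by restricting states to a subset of independent parameters S' and actions to the subset R' of action types acting only on those parameters), then the projection map sending each prefix of 𝒯 to the prefix of 𝒯' obtained by restricting states to S' and deleting events whose action type is not in R' is a surjective derivation, so Drv(𝒯, 𝒯') holds. -/

import Mathlib

open Classical in
/-- `IsRun T s evs` : starting from state `s`, the list of events `evs`
(each event a pair of an action type and the state reached) follows the
transition function `T`. -/
def IsRun {P V R : Type*} (T : R → (P → V) → (P → V)) :
    (P → V) → List (R × (P → V)) → Prop
  | _, [] => True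
  | s, (r, s') :: rest => T r s = s' ∧ IsRun T s' rest

/-- Traces (prefixes) of the transition system `⟨S, R, T, S₀⟩`. -/
def Traces {P V R : Type*} (T : R → (P → V) → (P → V)) (S0 : Set (P → V)) :
    Set ((P → V) × List (R × (P → V))) :=
  {t | t.1 ∈ S0 ∧ IsRun T t.1 t.2}

/-- Runs of the restricted system, whose events all carry action types in `R'`. -/
def IsRun' {P V R : Type*} (P' : Set P) (R' : Set R)
    (T' : R → (↥P' → V) → (↥P' → V)) :
    (↥P' → V) → List (R × (↥P' → V)) → Prop
  | _, [] => True
  | s, (r, s') :: rest => r ∈ R' ∧ T' r s = s' ∧ IsRun' P' R' T' s' rest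

/-- Traces of the restricted system. -/
def Traces' {P V R : Type*} (P' : Set P) (R' : Set R)
    (T' : R → (↥P' → V) → (↥P' → V)) (S0' : Set (↥P' → V)) :
    Set ((↥P' → V) × List (R × (↥P' → V))) :=
  {t | t.1 ∈ S0' ∧ IsRun' P' R' T' t.1 t.2}

/-- Restriction of a state to the parameters in `P'`. -/
def projState {P V : Type*} (P' : Set P) (s : P → V) : ↥P' → V :=
  fun p => s p.1

open Classical in
/-- Projection of a trace: restrict all states to `P'` and delete the
events whose action type is not in `R'`. -/
noncomputable def projTrace {P V R : Type*} (P' : Set P) (R' : Set R)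
    (t : (P → V) × List (R × (P → V))) :
    (↥P' → V) × List (R × (↥P' → V)) :=
  (projState P' t.1,
    (t.2.filter fun e => decide (e.1 ∈ R')).map fun e => (e.1, projState P' e.2))

def prefOf {S E : Type*} (t : S × List E) (i : ℕ) : S × List E :=
  (t.1, t.2.take i)

def ple {S E : Type*} (u v : S × List E) : Prop :=
  u.1 = v.1 ∧ u.2 <+: v.2

def IsDerivation {Sc Ec Sd Ed : Type*} (S0d : Set Sd)
    (D : Sc × List Ec → Sd × List Ed) (Dom : Set (Sc × List Ec)) : Prop :=
  ∀ tc ∈ Dom, ∃ ch : ℕ → Sc × List Ec,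
    ch (D tc).2.length = tc ∧
    (∀ i j, i ≤ j → j ≤ (D tc).2.length → ple (ch i) (ch j)) ∧
    (∀ i ≤ (D tc).2.length, ch i ∈ Dom ∧ D (ch i) = prefOf (D tc) i) ∧
    (D (ch 0)).1 ∈ S0d

open Classical in
/-- `maxcut R' l i` : length of the maximal prefix of `l` containing exactly
`i` events with action type in `R'` (or all of `l` if there are fewer). -/
noncomputable def maxcut {R S : Type*} (R' : Set R) : List (R × S) → ℕ → ℕ
  | [], _ => 0
  | e :: rest, i =>
    if e.1 ∈ R' then
      (match i with
       | 0 => 0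
       | i + 1 => maxcut R' rest i + 1)
    else maxcut R' rest i + 1

open Classical in
lemma filter_take_maxcut {R S : Type*} (R' : Set R) (l : List (R × S)) (i : ℕ) :
    (l.take (maxcut R' l i)).filter (fun e => decide (e.1 ∈ R')) =
      (l.filter (fun e => decide (e.1 ∈ R'))).take i := by
  induction l generalizing i with
  | nil => simp [maxcut]
  | cons e rest ih =>
    by_cases h : e.1 ∈ R'
    · cases i with
      | zero => simp [maxcut, h]
      | succ i => simp [maxcut, h, List.filter_cons, ih]
    · simp [maxcut, h, List.filter_cons, ih]

open Classical in
lemma maxcut_of_le {R S : Type*} (R' : Set R) (l : List (R × S)) (i : ℕ)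
    (h : (l.filter (fun e => decide (e.1 ∈ R'))).length ≤ i) :
    maxcut R' l i = l.length := by
  induction l generalizing i with
  | nil => simp [maxcut]
  | cons e rest ih =>
    by_cases he : e.1 ∈ R'
    · simp only [List.filter_cons, he, decide_eq_true_eq, if_pos] at h
      cases i with
      | zero => simp at h
      | succ i =>
        simp only [maxcut, he, if_pos, List.length_cons]
        rw [ih i (by simpa using h)]
    · simp only [List.filter_cons, he, decide_eq_true_eq, if_neg] at h
      simp only [maxcut, he, if_neg, List.length_cons]
      rw [ih i (by simpa using h)]
      simp

open Classical in
lemma maxcut_mono {R S : Type*} (R' : Set R) (l : List (R × S)) {i j : ℕ}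
    (h : i ≤ j) : maxcut R' l i ≤ maxcut R' l j := by
  induction l generalizing i j with
  | nil => simp [maxcut]
  | cons e rest ih =>
    by_cases he : e.1 ∈ R'
    · cases i with
      | zero => simp [maxcut, he]
      | succ i =>
        cases j with
        | zero => omega
        | succ j =>
          simp only [maxcut, he, if_pos]
          exact Nat.succ_le_succ (ih (Nat.succ_le_succ_iff.mp h))
    · simp only [maxcut, he, if_neg]
      exact Nat.succ_le_succ (ih h)

lemma isRun_take {P V R : Type*} (T : R → (P → V) → (P → V))
    (s : P → V) (l : List (R × (P → V))) (k : ℕ)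
    (h : IsRun T s l) : IsRun T s (l.take k) := by
  induction l generalizing s k with
  | nil => simp [IsRun]
  | cons e rest ih =>
    obtain ⟨r, s'⟩ := e
    cases k with
    | zero => simp [IsRun]
    | succ k => exact ⟨h.1, ih s' k h.2⟩

open Classical in
lemma isRun_proj {P V R : Type*} (T : R → (P → V) → (P → V))
    (P' : Set P) (R' : Set R) (T' : R → (↥P' → V) → (↥P' → V))
    (hR' : ∀ r ∈ R', ∀ s : P → V, projState P' (T r s) = T' r (projState P' s))
    (hRout : ∀ r ∉ R', ∀ s : P → V, projState P' (T r s) = projState P' s)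
    (s : P → V) (l : List (R × (P → V))) (h : IsRun T s l) :
    IsRun' P' R' T' (projState P' s)
      ((l.filter (fun e => decide (e.1 ∈ R'))).map fun e => (e.1, projState P' e.2)) := by
  induction l generalizing s with
  | nil => simp [IsRun']
  | cons e rest ih =>
    obtain ⟨r, s'⟩ := e
    obtain ⟨hts, hrest⟩ := h
    by_cases hr : r ∈ R'
    · simp only [List.filter_cons, decide_eq_true_eq, hr, if_pos, List.map_cons]
      exact ⟨hr, by rw [← hts, hR' r hr s], ih s' hrest⟩
    · simp only [List.filter_cons, decide_eq_true_eq, hr, if_neg, not_false_iff]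
      have := ih s' hrest
      rwa [← hts, hRout r hr s] at this

/-- Lift a run of the restricted system to a run of the full system. -/
def liftRun {P V R : Type*} (T : R → (P → V) → (P → V)) {S' : Type*} :
    (P → V) → List (R × S') → List (R × (P → V))
  | _, [] => []
  | s, (r, _) :: rest => (r, T r s) :: liftRun T (T r s) rest

lemma isRun_liftRun {P V R : Type*} (T : R → (P → V) → (P → V)) {S' : Type*}
    (s : P → V) (l : List (R × S')) : IsRun T s (liftRun T s l) := by
  induction l generalizing s with
  | nil => simp [liftRun, IsRun]
  | cons e rest ih =>
    obtain ⟨r, u⟩ := e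
    exact ⟨rfl, ih (T r s)⟩

open Classical in
lemma proj_liftRun {P V R : Type*} (T : R → (P → V) → (P → V))
    (P' : Set P) (R' : Set R) (T' : R → (↥P' → V) → (↥P' → V))
    (hR' : ∀ r ∈ R', ∀ s : P → V, projState P' (T r s) = T' r (projState P' s))
    (s : P → V) (l : List (R × (↥P' → V)))
    (h : IsRun' P' R' T' (projState P' s) l) :
    ((liftRun T s l).filter (fun e => decide (e.1 ∈ R'))).map
      (fun e => (e.1, projState P' e.2)) = l := by
  induction l generalizing s with
  | nil => simp [liftRun]
  | cons e rest ih =>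
    obtain ⟨r, u⟩ := e
    obtain ⟨hr, ht, hrest⟩ := h
    have hproj : projState P' (T r s) = u := by rw [hR' r hr s, ht]
    simp only [liftRun, List.filter_cons, decide_eq_true_eq, hr, if_pos, List.map_cons,
      hproj]
    rw [ih (T r s) (by rwa [hproj])]

/-- A parametric subtrace is a derived trace: the projection map is a
surjective derivation from the traces of `⟨S, R, T, S₀⟩` onto the traces
of the restricted system `⟨S', R', T', S₀'⟩`. -/
theorem parametric_subtrace_is_derived {P V R : Type*}
    (T : R → (P → V) → (P → V)) (S0 : Set (P → V))
    (P' : Set P) (R' : Set R)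
    (T' : R → (↥P' → V) → (↥P' → V))
    -- actions in R' use only parameters of P' : the P'-part of the
    -- successor state is computed from the P'-part of the current state
    (hR' : ∀ r ∈ R', ∀ s : P → V, projState P' (T r s) = T' r (projState P' s))
    -- no action outside R' modifies a parameter of P'
    (hRout : ∀ r ∉ R', ∀ s : P → V, projState P' (T r s) = projState P' s) :
    IsDerivation (projState P' '' S0) (projTrace P' R')
      (Traces T S0) ∧
    (∀ t ∈ Traces T S0, projTrace P' R' t ∈ Traces' P' R' T' (projState P' '' S0)) ∧
    (∀ t' ∈ Traces' P' R' T' (projState P' '' S0),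
      ∃ t ∈ Traces T S0, projTrace P' R' t = t') := by
  classical
  refine ⟨?_, ?_, ?_⟩
  · -- derivation
    rintro ⟨s0, l⟩ ⟨hs0, hrun⟩
    set p : R × (P → V) → Bool := fun e => decide (e.1 ∈ R') with hp
    have hlen : (projTrace P' R' (s0, l)).2.length = (l.filter p).length := by
      simp [projTrace, hp]
    refine ⟨fun i => (s0, l.take (maxcut R' l i)), ?_, ?_, ?_, ?_⟩
    · dsimp only
      rw [hlen, maxcut_of_le R' l _ le_rfl, List.take_length]
    · intro i j hij _
      refine ⟨rfl, ?_⟩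
      dsimp only
      have : l.take (maxcut R' l i) = (l.take (maxcut R' l j)).take (maxcut R' l i) := by
        rw [List.take_take, min_eq_left (maxcut_mono R' l hij)]
      rw [this]
      exact List.take_prefix _ _
    · intro i _
      dsimp only
      refine ⟨⟨hs0, isRun_take T s0 l _ hrun⟩, ?_⟩
      simp only [projTrace, prefOf]
      refine Prod.ext rfl ?_
      simp only
      rw [filter_take_maxcut, List.map_take]
    · exact ⟨s0, hs0, rfl⟩
  · -- projection of a trace is a trace of the restricted system
    rintro ⟨s0, l⟩ ⟨hs0, hrun⟩
    exact ⟨⟨s0, hs0, rfl⟩, isRun_proj T P' R' T' hR' hRout s0 l hrun⟩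
  · -- surjectivity
    rintro ⟨s0', l'⟩ ⟨⟨s0, hs0, hproj⟩, hrun'⟩
    refine ⟨(s0, liftRun T s0 l'), ⟨hs0, isRun_liftRun T s0 l'⟩, ?_⟩
    simp only [projTrace]
    refine Prod.ext hproj ?_
    exact proj_liftRun T P' R' T' hR' s0 l' (by rwa [hproj])
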